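/- Let P be a Borel probability measure on ℝ^k, let u ∈ ℝ^k with ‖u‖₂ < 1, let c = 3/(1-‖u‖₂), and let 0 < ε < (1/c)/((1/c) + ‖u‖₂ + 1). Suppose K > 0 satisfies P(‖Y‖₂ ≤ K) > 1 - ε. Then for every θ ∈ ℝ^k with ‖θ‖₂ ≥ cK, the expectation M(θ) = ∫ (‖y-θ‖₂ - ‖y‖₂ - ⟨u,θ⟩) dP(y) satisfies M(θ) ≥ ‖θ‖₂·(1/c - (1 + ‖u‖₂ + 1/c)·ε) > 0. -/

import Mathlib

open scoped RealInnerProductSpace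
open MeasureTheory

/-- If `P(‖Y‖ ≤ K) > 1 - ε` with `ε` small enough, then for `‖θ‖ ≥ c*K` the
geometric-quantile objective `M(θ) = ∫ (‖y-θ‖ - ‖y‖ - ⟪u,θ⟫) dP(y)` satisfies
`M(θ) ≥ ‖θ‖·(1/c - (1 + ‖u‖ + 1/c)·ε) > 0`. -/
theorem stmt4 {k : ℕ} (P : Measure (EuclideanSpace ℝ (Fin k)))
    [IsProbabilityMeasure P]
    (u : EuclideanSpace ℝ (Fin k)) (hu : ‖u‖ < 1)
    (c : ℝ) (hc : c = 3 / (1 - ‖u‖))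
    (ε : ℝ) (hε : 0 < ε) (hε' : ε < (1 / c) / (1 / c + ‖u‖ + 1))
    (K : ℝ) (hK : 0 < K)
    (hPK : 1 - ε < (P {y | ‖y‖ ≤ K}).toReal) :
    ∀ θ : EuclideanSpace ℝ (Fin k), c * K ≤ ‖θ‖ →
      ‖θ‖ * (1 / c - (1 + ‖u‖ + 1 / c) * ε)
          ≤ ∫ y, (‖y - θ‖ - ‖y‖ - ⟪u, θ⟫) ∂P
        ∧ 0 < ‖θ‖ * (1 / c - (1 + ‖u‖ + 1 / c) * ε) := by
  intro θ hθ
  have h1u : 0 < 1 - ‖u‖ := by linarith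
  have hc0 : 0 < c := by rw [hc]; positivity
  have hcinv : 1 / c = (1 - ‖u‖) / 3 := by rw [hc]; field_simp
  have hθ0 : 0 < ‖θ‖ := lt_of_lt_of_le (by positivity) hθ
  have hKθ : K ≤ ‖θ‖ * (1 / c) := by
    rw [mul_one_div]
    exact (le_div_iff₀ hc0).mpr (by linarith [hθ])
  have hu0 : (0:ℝ) ≤ ‖u‖ := norm_nonneg u
  -- positivity of the lower bound
  have hd : 0 < 1 / c + ‖u‖ + 1 := by positivity
  have hεb : ε * (1 / c + ‖u‖ + 1) < 1 / c := (lt_div_iff₀ hd).mp hε'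
  have hpos : 0 < ‖θ‖ * (1 / c - (1 + ‖u‖ + 1 / c) * ε) := by
    have : 0 < 1 / c - (1 + ‖u‖ + 1 / c) * ε := by nlinarith
    positivity
  refine ⟨?_, hpos⟩
  set A : Set (EuclideanSpace ℝ (Fin k)) := {y | ‖y‖ ≤ K} with hAdef
  have hA : MeasurableSet A :=
    (isClosed_le continuous_norm continuous_const).measurableSet
  set a : ℝ := ‖θ‖ * (1 / c) with ha
  set b : ℝ := -((1 + ‖u‖) * ‖θ‖) with hb
  set f : EuclideanSpace ℝ (Fin k) → ℝ := fun y => ‖y - θ‖ - ‖y‖ - ⟪u, θ⟫ with hf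
  set g : EuclideanSpace ℝ (Fin k) → ℝ :=
    fun y => A.indicator (fun _ => a) y + Aᶜ.indicator (fun _ => b) y with hg
  -- pointwise bound g ≤ f
  have hgf : ∀ y, g y ≤ f y := by
    intro y
    have h1 : ‖θ‖ - ‖y‖ ≤ ‖y - θ‖ := by
      have := norm_sub_norm_le θ y
      rwa [norm_sub_rev] at this
    have h2 : ‖y‖ - ‖y - θ‖ ≤ ‖θ‖ := by
      have := norm_sub_norm_le y (y - θ)
      simpa using this
    have h3 : ⟪u, θ⟫ ≤ ‖u‖ * ‖θ‖ := real_inner_le_norm u θ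
    by_cases hy : y ∈ A
    · have hyK : ‖y‖ ≤ K := hy
      simp only [hg, Set.indicator_of_mem hy, Set.indicator_of_notMem (by simp [hy] :
        y ∉ Aᶜ), add_zero, hf, ha]
      nlinarith [hcinv, hKθ]
    · simp only [hg, Set.indicator_of_notMem hy, Set.indicator_of_mem
        (Set.mem_compl hy), zero_add, hf, hb]
      nlinarith
  -- integrability
  have hfm : Continuous f := by
    exact ((continuous_id.sub continuous_const).norm.sub continuous_norm).sub
      continuous_const
  have hfi : Integrable f P := by
    refine (integrable_const ((1 + ‖u‖) * ‖θ‖)).mono' hfm.aestronglyMeasurable ?_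
    filter_upwards with y
    have h1 : |‖y - θ‖ - ‖y‖| ≤ ‖θ‖ := by
      have := abs_norm_sub_norm_le (y - θ) y
      simpa using this
    have h2 : |⟪u, θ⟫| ≤ ‖u‖ * ‖θ‖ := abs_real_inner_le_norm u θ
    simp only [hf, Real.norm_eq_abs]
    calc |‖y - θ‖ - ‖y‖ - ⟪u, θ⟫| ≤ |‖y - θ‖ - ‖y‖| + |⟪u, θ⟫| := abs_sub _ _
      _ ≤ (1 + ‖u‖) * ‖θ‖ := by nlinarith
  have hgi : Integrable g P :=
    ((integrable_const a).indicator hA).add ((integrable_const b).indicator hA.compl)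
  -- integral of g
  have hgint : ∫ y, g y ∂P = (P A).toReal * a + (P Aᶜ).toReal * b := by
    rw [hg, integral_add ((integrable_const a).indicator hA)
      ((integrable_const b).indicator hA.compl),
      integral_indicator_const a hA, integral_indicator_const b hA.compl,
      smul_eq_mul, smul_eq_mul]
    rfl
  have hle : ∫ y, g y ∂P ≤ ∫ y, f y ∂P :=
    integral_mono hgi hfi hgf
  -- measure arithmetic
  have hPA1 : (P A).toReal ≤ 1 := by
    have := prob_le_one (μ := P) (s := A)
    simpa using ENNReal.toReal_mono (by simp) this
  have hcompl : (P Aᶜ).toReal = 1 - (P A).toReal := by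
    rw [prob_compl_eq_one_sub hA, ENNReal.toReal_sub_of_le prob_le_one (by simp)]
    simp
  have hPA : 1 - ε < (P A).toReal := hPK
  have hfinal : ‖θ‖ * (1 / c - (1 + ‖u‖ + 1 / c) * ε)
      ≤ (P A).toReal * a + (P Aᶜ).toReal * b := by
    rw [hcompl]
    have hab : 0 ≤ a - b := by
      simp only [ha, hb]
      nlinarith [one_div_pos.mpr hc0]
    nlinarith [hPA, hab]
  calc ‖θ‖ * (1 / c - (1 + ‖u‖ + 1 / c) * ε)
      ≤ (P A).toReal * a + (P Aᶜ).toReal * b := hfinal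
    _ = ∫ y, g y ∂P := hgint.symm
    _ ≤ ∫ y, f y ∂P := hle
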